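/- Let a_0, a_1, a_2, a_3 be nonnegative integers satisfying a_i + a_{i+2} ≥ a_{i+1} for i = −1, 0, 1, 2 (with a_{−1} = a_4 = 0), and suppose a_0 + a_2 = a_1 + a_3. Then every maximizer (r_1, r_2, r_3) of d(a, r) = Σ_{i=1}^3 r_i(a_i + a_{i−1} − r_{i−1} − r_i) over {r ∈ ℤ_{≥0}³ : r_i + r_{i+1} ≤ a_i for i = 0,...,3} satisfies r_1 = a_0, r_3 = a_3, and r_2 = a_1 − a_0 = a_2 − a_3, so that all Betti numbers β_i = a_i − r_i − r_{i+1} vanish. -/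
import Mathlib


/-- The dimension of the variety of length-3 chain complexes with ranks `(r₁, r₂, r₃)`. -/
def d3 (a₀ a₁ a₂ a₃ : ℕ) (r : ℤ × ℤ × ℤ) : ℤ :=
  r.1 * ((a₁ : ℤ) + a₀ - r.1) + r.2.1 * ((a₂ : ℤ) + a₁ - r.1 - r.2.1) +
    r.2.2 * ((a₃ : ℤ) + a₂ - r.2.1 - r.2.2)

/-- Feasibility of the rank vector `(r₁, r₂, r₃)`. -/
def feas3 (a₀ a₁ a₂ a₃ : ℕ) (r : ℤ × ℤ × ℤ) : Prop :=
  0 ≤ r.1 ∧ 0 ≤ r.2.1 ∧ 0 ≤ r.2.2 ∧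
    r.1 ≤ a₀ ∧ r.1 + r.2.1 ≤ a₁ ∧ r.2.1 + r.2.2 ≤ a₂ ∧ r.2.2 ≤ a₃

/-- Length 3, case `a₀ + a₂ = a₁ + a₃`: under the hypotheses
`a_i + a_{i+2} ≥ a_{i+1}` for `i = -1, 0, 1, 2` (with `a_{-1} = a₄ = 0`),
every maximizer of `d3` satisfies `r₁ = a₀`, `r₃ = a₃`, `r₂ = a₁ - a₀ = a₂ - a₃`,
and all Betti numbers `β_i = a_i - r_i - r_{i+1}` vanish. -/
theorem stmt10 (a₀ a₁ a₂ a₃ : ℕ)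
    (hm1 : a₀ ≤ a₁) (h0 : a₁ ≤ a₀ + a₂) (h1 : a₂ ≤ a₁ + a₃) (h2 : a₃ ≤ a₂)
    (hcase : a₀ + a₂ = a₁ + a₃) :
    ∀ r : ℤ × ℤ × ℤ, feas3 a₀ a₁ a₂ a₃ r →
      (∀ s : ℤ × ℤ × ℤ, feas3 a₀ a₁ a₂ a₃ s →
        d3 a₀ a₁ a₂ a₃ s ≤ d3 a₀ a₁ a₂ a₃ r) →
      r.1 = (a₀ : ℤ) ∧ r.2.2 = (a₃ : ℤ) ∧
      r.2.1 = (a₁ : ℤ) - a₀ ∧ r.2.1 = (a₂ : ℤ) - a₃ ∧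
      (a₀ : ℤ) - r.1 = 0 ∧ (a₁ : ℤ) - r.1 - r.2.1 = 0 ∧
      (a₂ : ℤ) - r.2.1 - r.2.2 = 0 ∧ (a₃ : ℤ) - r.2.2 = 0 := by
  intro r hf hmax
  have hc : (a₀ : ℤ) + a₂ = a₁ + a₃ := by exact_mod_cast hcase
  have hm1' : (a₀ : ℤ) ≤ a₁ := by exact_mod_cast hm1
  obtain ⟨hr1, hr2, hr3, hA, hB, hC, hD⟩ := hf
  have hfs : feas3 a₀ a₁ a₂ a₃ ((a₀ : ℤ), (a₁ : ℤ) - a₀, (a₃ : ℤ)) := by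
    refine ⟨by positivity, by simpa using hm1', by positivity, le_refl _, by simp, ?_, le_refl _⟩
    simp only
    linarith
  have hD' := hmax _ hfs
  simp only [d3] at hD'
  have hid : (((a₁ : ℤ) - r.1 - r.2.1) - ((a₂ : ℤ) - r.2.1 - r.2.2)) ^ 2 +
      (((a₃ : ℤ) - r.2.2) - ((a₂ : ℤ) - r.2.1 - r.2.2)) ^ 2 +
      (((a₁ : ℤ) - r.1 - r.2.1) + ((a₃ : ℤ) - r.2.2)) ^ 2 =
      2 * (((a₀ : ℤ) * ((a₁ : ℤ) + a₀ - a₀) +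
        ((a₁ : ℤ) - a₀) * ((a₂ : ℤ) + a₁ - a₀ - ((a₁ : ℤ) - a₀)) +
        (a₃ : ℤ) * ((a₃ : ℤ) + a₂ - ((a₁ : ℤ) - a₀) - a₃)) -
        (r.1 * ((a₁ : ℤ) + a₀ - r.1) + r.2.1 * ((a₂ : ℤ) + a₁ - r.1 - r.2.1) +
          r.2.2 * ((a₃ : ℤ) + a₂ - r.2.1 - r.2.2))) := by
    linear_combination (2 * ((a₂ : ℤ) - a₁ - a₃ + r.1)) * hc
  have hsos : (((a₁ : ℤ) - r.1 - r.2.1) - ((a₂ : ℤ) - r.2.1 - r.2.2)) ^ 2 +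
      (((a₃ : ℤ) - r.2.2) - ((a₂ : ℤ) - r.2.1 - r.2.2)) ^ 2 +
      (((a₁ : ℤ) - r.1 - r.2.1) + ((a₃ : ℤ) - r.2.2)) ^ 2 ≤ 0 := by
    rw [hid]
    linarith
  have s1 := sq_nonneg ((((a₁ : ℤ) - r.1 - r.2.1) - ((a₂ : ℤ) - r.2.1 - r.2.2)))
  have s2 := sq_nonneg ((((a₃ : ℤ) - r.2.2) - ((a₂ : ℤ) - r.2.1 - r.2.2)))
  have s3 := sq_nonneg ((((a₁ : ℤ) - r.1 - r.2.1) + ((a₃ : ℤ) - r.2.2)))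
  have e1 : (((a₁ : ℤ) - r.1 - r.2.1) - ((a₂ : ℤ) - r.2.1 - r.2.2)) = 0 := by
    have : (((a₁ : ℤ) - r.1 - r.2.1) - ((a₂ : ℤ) - r.2.1 - r.2.2)) ^ 2 = 0 := le_antisymm (by linarith) s1
    exact pow_eq_zero_iff (by norm_num) |>.mp this
  have e2 : (((a₃ : ℤ) - r.2.2) - ((a₂ : ℤ) - r.2.1 - r.2.2)) = 0 := by
    have : (((a₃ : ℤ) - r.2.2) - ((a₂ : ℤ) - r.2.1 - r.2.2)) ^ 2 = 0 := le_antisymm (by linarith) s2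
    exact pow_eq_zero_iff (by norm_num) |>.mp this
  have e3 : (((a₁ : ℤ) - r.1 - r.2.1) + ((a₃ : ℤ) - r.2.2)) = 0 := by
    have : (((a₁ : ℤ) - r.1 - r.2.1) + ((a₃ : ℤ) - r.2.2)) ^ 2 = 0 := le_antisymm (by linarith) s3
    exact pow_eq_zero_iff (by norm_num) |>.mp this
  refine ⟨by linarith, by linarith, by linarith, by linarith, by linarith, by linarith, by linarith, by linarith⟩
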